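/- In SP_9, for every positive edge uv there exist exactly two vertices z such that uz is positive and vz is negative. -/
import Mathlib


/-- Vertices of `SP_9`, identified with `{0,1,2} × {0,1,2}`. -/
abbrev V9 : Type := Fin 3 × Fin 3

/-- The edge `uv` of `SP_9` is positive: `u ≠ v` and they agree in exactly one coordinate. -/
abbrev pos9 (u v : V9) : Prop :=
  (u.1 = v.1 ∧ u.2 ≠ v.2) ∨ (u.1 ≠ v.1 ∧ u.2 = v.2)

/-- The edge `uv` of `SP_9` is negative: `u ≠ v` and it is not positive. -/
abbrev neg9 (u v : V9) : Prop := u ≠ v ∧ ¬ pos9 u v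

/-- For every positive edge `uv` of `SP_9` there are exactly two vertices `z`
with `uz` positive and `vz` negative. -/
theorem sp9_pos_edge_two_mixed :
    ∀ u v : V9, pos9 u v →
      (Finset.univ.filter (fun z : V9 => pos9 u z ∧ neg9 v z)).card = 2 := by
  decide
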